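/- Let p : I₁ × ⋯ × I_K → ℝ be a probability distribution on a product of finite index sets (nonneg, sums to 1). For each α, let p^α denote the α-th marginal. If for every α the maximum of p^α is strictly greater than K/(K+1), then the (unique) index tuple maximizing p equals the tuple whose α-th coordinate maximizes p^α. -/

import Mathlib

open Finset

/-- Parallel decoding theorem: if every marginal of a probability distribution on a
product of finite index sets has its maximum value strictly greater than `K/(K+1)`,
then the joint distribution attains its global maximum at the tuple of marginal
maximizers. -/
theorem stmt_0 {K : ℕ} (hK : 1 ≤ K) (I : Fin K → Type)
    [∀ α, Fintype (I α)] [∀ α, Nonempty (I α)] [∀ α, DecidableEq (I α)]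
    (p : (∀ α, I α) → ℝ) (hp : ∀ j, 0 ≤ p j) (hsum : ∑ j, p j = 1)
    (iopt : ∀ α, I α)
    (hmarg : ∀ α : Fin K,
      (K : ℝ) / (K + 1) <
        ∑ j ∈ Finset.univ.filter (fun j : ∀ α, I α => j α = iopt α), p j) :
    ∀ j, p j ≤ p iopt := by
  have hK1 : (0:ℝ) < (K:ℝ) + 1 := by positivity
  set m : Fin K → ℝ :=
    fun α => ∑ j ∈ Finset.univ.filter (fun j : ∀ α, I α => j α = iopt α), p j with hm
  have hm1 : ∀ α, m α ≤ 1 := by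
    intro α
    calc m α ≤ ∑ j, p j :=
          Finset.sum_le_sum_of_subset_of_nonneg (Finset.filter_subset _ _)
            (fun i _ _ => hp i)
      _ = 1 := hsum
  -- double counting
  have hswap : ∑ α, m α
      = ∑ j, ((Finset.univ.filter (fun α => j α = iopt α)).card : ℝ) * p j := by
    simp only [hm, Finset.sum_filter]
    rw [Finset.sum_comm]
    refine Finset.sum_congr rfl fun j _ => ?_
    rw [← Finset.sum_filter, Finset.sum_const, nsmul_eq_mul]
  have hrest : ∑ j ∈ Finset.univ.erase iopt, p j = 1 - p iopt := by
    have := Finset.add_sum_erase Finset.univ p (Finset.mem_univ iopt)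
    rw [hsum] at this
    linarith
  have hub : ∑ α, m α ≤ ((K:ℝ) - 1) + p iopt := by
    rw [hswap, ← Finset.add_sum_erase Finset.univ _ (Finset.mem_univ iopt)]
    have h1 : ((Finset.univ.filter (fun α => iopt α = iopt α)).card : ℝ) = K := by
      simp
    have h2 : ∑ j ∈ Finset.univ.erase iopt,
        ((Finset.univ.filter (fun α => j α = iopt α)).card : ℝ) * p j
        ≤ ((K:ℝ) - 1) * (1 - p iopt) := by
      rw [← hrest, Finset.mul_sum]
      refine Finset.sum_le_sum fun j hj => ?_
      have hjne : j ≠ iopt := Finset.ne_of_mem_erase hj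
      have hcard : (Finset.univ.filter (fun α => j α = iopt α)).card < K := by
        have hss : Finset.univ.filter (fun α => j α = iopt α) ⊂ Finset.univ := by
          refine Finset.ssubset_univ_iff.mpr ?_
          intro h
          apply hjne
          funext α
          have := (Finset.mem_filter.mp (h ▸ Finset.mem_univ α)).2
          exact this
        simpa using Finset.card_lt_card hss
      have : ((Finset.univ.filter (fun α => j α = iopt α)).card : ℝ) ≤ (K:ℝ) - 1 := by
        have : ((Finset.univ.filter (fun α => j α = iopt α)).card : ℝ) + 1 ≤ K := by
          exact_mod_cast hcard
        linarith
      exact mul_le_mul_of_nonneg_right this (hp j)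
    have hpi : p iopt ≤ 1 := by
      have : ∑ j ∈ Finset.univ.erase iopt, p j ≥ 0 :=
        Finset.sum_nonneg fun j _ => hp j
      linarith [hrest]
    nlinarith [hp iopt]
  have hlb : (K:ℝ) * ((K:ℝ) / ((K:ℝ) + 1)) < ∑ α, m α := by
    have : ∑ α : Fin K, ((K:ℝ) / ((K:ℝ) + 1)) < ∑ α, m α :=
      Finset.sum_lt_sum_of_nonempty
        (Finset.univ_nonempty_iff.mpr ⟨⟨0, hK⟩⟩) (fun α _ => hmarg α)
    simpa using this
  have hkey : 1 / ((K:ℝ) + 1) < p iopt := by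
    have heq : (K:ℝ) * ((K:ℝ) / ((K:ℝ) + 1)) - ((K:ℝ) - 1) = 1 / ((K:ℝ) + 1) := by
      field_simp
      ring
    linarith
  intro j
  by_cases hj : j = iopt
  · exact hj ▸ le_refl _
  · obtain ⟨α, hα⟩ : ∃ α, j α ≠ iopt α := by
      by_contra h
      exact hj (funext fun α => not_not.mp fun h' => h ⟨α, h'⟩)
    have hsplit : m α + ∑ j ∈ Finset.univ.filter (fun j : ∀ α, I α => ¬ j α = iopt α), p j
        = 1 := by
      rw [hm, Finset.sum_filter_add_sum_filter_not, hsum]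
    have hjle : p j ≤ ∑ j ∈ Finset.univ.filter (fun j : ∀ α, I α => ¬ j α = iopt α), p j :=
      Finset.single_le_sum (fun i _ => hp i)
        (Finset.mem_filter.mpr ⟨Finset.mem_univ _, hα⟩)
    have : p j ≤ 1 - m α := by linarith
    have h1m : 1 - m α < 1 / ((K:ℝ) + 1) := by
      have := hmarg α
      have heq : 1 - (K:ℝ) / ((K:ℝ) + 1) = 1 / ((K:ℝ) + 1) := by
        field_simp
        ring
      simp only [hm]
      linarith
    linarith
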